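/- arXiv:1403.2898 — 7 statements merged into one kernel-verified Lean document; each statement's English description precedes it below -/
import Mathlib

section
/- For A, B ∈ G(Z,C) and a family ℬ ⊆ G(Z,C), it holds that A ⊕ inf ℬ = inf{A ⊕ B | B ∈ ℬ}, where A ⊕ B = cl(A + B) and inf is taken with respect to ⊇, i.e., inf ℬ = cl co ⋃_{B ∈ ℬ} B (with inf ∅ = ∅ interpreted appropriately). In particular (G(Z,C), ⊕, ⊇) is inf-residuated. -/
open Pointwise

/-- The family `G(Z,C) = {A ⊆ Z | A = cl co (A + C)}`. -/
def GSet (Z : Type*) [AddCommGroup Z] [Module ℝ Z] [TopologicalSpace Z] (C : Set Z) :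
    Set (Set Z) :=
  {A : Set Z | A = closure (convexHull ℝ (A + C))}

/-- For `A ∈ G(Z,C)` and `ℬ ⊆ G(Z,C)`: `A ⊕ inf ℬ = inf {A ⊕ B | B ∈ ℬ}`, where
`A ⊕ B = cl(A + B)` and the infimum with respect to `⊇` is
`inf ℬ = cl co ⋃_{B ∈ ℬ} B`.  In particular `(G(Z,C), ⊕, ⊇)` is inf-residuated. -/
theorem GSet_oplus_inf
    {Z : Type*} [AddCommGroup Z] [Module ℝ Z] [TopologicalSpace Z]
    [IsTopologicalAddGroup Z] [ContinuousSMul ℝ Z] [LocallyConvexSpace ℝ Z]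
    (C : Set Z) (hCclosed : IsClosed C) (hCconv : Convex ℝ C) (hC0 : (0 : Z) ∈ C)
    (hCcone : ∀ c ∈ C, ∀ t : ℝ, 0 < t → t • c ∈ C)
    (A : Set Z) (hA : A ∈ GSet Z C) (ℬ : Set (Set Z)) (hℬ : ℬ ⊆ GSet Z C) :
    closure (A + closure (convexHull ℝ (⋃₀ ℬ))) =
      closure (convexHull ℝ (⋃ B ∈ ℬ, closure (A + B))) := by
  have hAconv : Convex ℝ A := by
    rw [hA]; exact (convex_convexHull ℝ _).closure
  set S : Set Z := ⋃₀ ℬ with hS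
  apply subset_antisymm
  · -- `A + closure (co S) ⊆ closure (A + co S)`
    have h1 : A + closure (convexHull ℝ S) ⊆ closure (A + convexHull ℝ S) := by
      rintro x ⟨a, ha, y, hy, rfl⟩
      have : a + y ∈ a +ᵥ closure (convexHull ℝ S) := ⟨y, hy, rfl⟩
      have h2 := vadd_closure_subset a (convexHull ℝ S) this
      refine closure_mono ?_ h2
      rintro z ⟨w, hw, rfl⟩
      exact ⟨a, ha, w, hw, rfl⟩
    have h3 : A + convexHull ℝ S ⊆ convexHull ℝ (⋃ B ∈ ℬ, closure (A + B)) := by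
      have : A + convexHull ℝ S ⊆ convexHull ℝ (A + S) := by
        rw [convexHull_add]
        exact Set.add_subset_add (subset_convexHull ℝ A) le_rfl
      refine this.trans (convexHull_mono ?_)
      rintro x ⟨a, ha, s, hs, rfl⟩
      obtain ⟨B, hB, hsB⟩ := hs
      exact Set.mem_biUnion hB (subset_closure ⟨a, ha, s, hsB, rfl⟩)
    calc closure (A + closure (convexHull ℝ S))
        ⊆ closure (closure (A + convexHull ℝ S)) := closure_mono h1
      _ = closure (A + convexHull ℝ S) := closure_closure
      _ ⊆ closure (convexHull ℝ (⋃ B ∈ ℬ, closure (A + B))) := closure_mono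
          h3
  · -- reverse inclusion
    have hclosed : IsClosed (closure (A + closure (convexHull ℝ S))) := isClosed_closure
    have hconv : Convex ℝ (closure (A + closure (convexHull ℝ S))) :=
      (hAconv.add (convex_convexHull ℝ S).closure).closure
    refine closure_minimal (convexHull_min ?_ hconv) hclosed
    rintro x hx
    obtain ⟨B, hB, hxB⟩ := Set.mem_iUnion₂.mp hx
    have : A + B ⊆ A + closure (convexHull ℝ S) :=
      Set.add_subset_add le_rfl
        (((Set.subset_sUnion_of_mem hB).trans (subset_convexHull ℝ S)).trans subset_closure)
    exact closure_mono this hxB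
end

section
/- Let φ : X → ℝ ∪ {±∞} and a, b ∈ X with a ≠ b such that the restriction φ_{a,b}(t) = φ(a + t(b-a)) for t ∈ [0,1] (and +∞ outside) is lower semicontinuous. If either φ(a) = +∞ or both a, b ∈ dom φ, then there exists t ∈ [0,1) such that φ(b) ⊖ φ(a) ≤ (φ_{a,b})↓(t, 1), where ⊖ is the inf-residuation on extended reals and (φ_{a,b})↓(t,1) = liminf_{s↓0} (1/s)(φ_{a,b}(t+s) ⊖ φ_{a,b}(t)) is the lower Dini derivative. -/
open Filter Set

/-- Inf-addition on the extended reals. -/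
noncomputable def infAdd (r s : EReal) : EReal :=
  sInf {x : EReal | ∃ a b : ℝ, x = ((a + b : ℝ) : EReal) ∧ r ≤ (a : EReal) ∧ s ≤ (b : EReal)}

/-- Inf-residuation on the extended reals: `r ⊖ s = inf {t ∈ ℝ | r ≤ s +• t}`. -/
noncomputable def eResid (r s : EReal) : EReal :=
  sInf {x : EReal | ∃ t : ℝ, x = (t : EReal) ∧ r ≤ infAdd s (t : EReal)}

/-- Lower Dini directional derivative of `ψ : ℝ → EReal` at `x` in direction `u`:
`ψ↓(x,u) = liminf_{t↓0} (1/t)(ψ(x+tu) ⊖ ψ(x))`. -/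
noncomputable def sDini (ψ : ℝ → EReal) (x u : ℝ) : EReal :=
  Filter.liminf (fun t : ℝ => ((1 / t : ℝ) : EReal) * eResid (ψ (x + t * u)) (ψ x))
    (nhdsWithin 0 (Set.Ioi 0))

lemma ereal_sInf_eq_bot {S : Set EReal} (h : ∀ t : ℝ, ∃ y ∈ S, y ≤ (t : EReal)) :
    sInf S = ⊥ := by
  rw [EReal.eq_bot_iff_forall_lt]
  intro y
  obtain ⟨z, hz, hle⟩ := h (y - 1)
  calc sInf S ≤ z := sInf_le hz
    _ ≤ ((y - 1 : ℝ) : EReal) := hle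
    _ < y := by exact_mod_cast sub_one_lt y

lemma infAdd_top_left (t : EReal) : infAdd ⊤ t = ⊤ := by
  rw [infAdd]
  refine (congrArg sInf (?_ : _ = (∅ : Set EReal))).trans sInf_empty
  ext x
  simp only [mem_setOf_eq, mem_empty_iff_false, iff_false, not_exists]
  rintro a b ⟨-, ha, -⟩
  exact (EReal.coe_lt_top a).not_ge ha

lemma infAdd_coe_coe (q t : ℝ) : infAdd (q : EReal) (t : EReal) = ((q + t : ℝ) : EReal) := by
  apply le_antisymm
  · exact sInf_le ⟨q, t, rfl, le_rfl, le_rfl⟩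
  · refine le_sInf ?_
    rintro x ⟨a, c, rfl, ha, hc⟩
    have ha' : q ≤ a := by exact_mod_cast ha
    have hc' : t ≤ c := by exact_mod_cast hc
    exact_mod_cast add_le_add ha' hc'

lemma infAdd_bot_left (t : ℝ) : infAdd ⊥ (t : EReal) = ⊥ := by
  refine ereal_sInf_eq_bot fun u => ⟨((u - t) + t : ℝ), ⟨u - t, t, rfl, bot_le, le_rfl⟩, ?_⟩
  exact_mod_cast le_of_eq (by ring)

lemma infAdd_ne_top {s : EReal} (hs : s ≠ ⊤) (t : ℝ) : infAdd s (t : EReal) ≠ ⊤ := by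
  induction s with
  | bot => rw [infAdd_bot_left]; exact bot_ne_top
  | coe q => rw [infAdd_coe_coe]; exact EReal.coe_ne_top _
  | top => exact absurd rfl hs

lemma eResid_bot_left (s : EReal) : eResid ⊥ s = ⊥ :=
  ereal_sInf_eq_bot fun t => ⟨t, ⟨t, rfl, bot_le⟩, le_rfl⟩

lemma eResid_top_right (r : EReal) : eResid r ⊤ = ⊥ :=
  ereal_sInf_eq_bot fun t => ⟨t, ⟨t, rfl, by rw [infAdd_top_left]; exact le_top⟩, le_rfl⟩

lemma eResid_top_left {s : EReal} (hs : s ≠ ⊤) : eResid ⊤ s = ⊤ := by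
  rw [eResid]
  refine (congrArg sInf (?_ : _ = (∅ : Set EReal))).trans sInf_empty
  ext x
  simp only [mem_setOf_eq, mem_empty_iff_false, iff_false, not_exists]
  rintro t ⟨-, h⟩
  exact infAdd_ne_top hs t (top_le_iff.mp h)

lemma eResid_bot_right {r : EReal} (hr : r ≠ ⊥) : eResid r ⊥ = ⊤ := by
  rw [eResid]
  refine (congrArg sInf (?_ : _ = (∅ : Set EReal))).trans sInf_empty
  ext x
  simp only [mem_setOf_eq, mem_empty_iff_false, iff_false, not_exists]
  rintro t ⟨-, h⟩
  rw [infAdd_bot_left] at h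
  exact hr (le_bot_iff.mp h)

lemma eResid_coe_coe (d c : ℝ) : eResid (d : EReal) (c : EReal) = ((d - c : ℝ) : EReal) := by
  apply le_antisymm
  · refine sInf_le ⟨d - c, rfl, ?_⟩
    rw [infAdd_coe_coe]
    exact_mod_cast le_of_eq (by ring)
  · refine le_sInf ?_
    rintro x ⟨t, rfl, h⟩
    rw [infAdd_coe_coe] at h
    have : d ≤ c + t := by exact_mod_cast h
    exact_mod_cast (by linarith : d - c ≤ t)

/-- A lower semicontinuous `EReal`-valued function attains its minimum on `Icc 0 1`. -/
lemma lsc_exists_min_Icc (f : ℝ → EReal) (hf : LowerSemicontinuous f) :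
    ∃ x ∈ Icc (0 : ℝ) 1, ∀ y ∈ Icc (0 : ℝ) 1, f x ≤ f y := by
  set m : EReal := sInf (f '' Icc (0 : ℝ) 1) with hm
  by_cases htop : m = ⊤
  · refine ⟨0, ⟨le_rfl, zero_le_one⟩, fun y hy => ?_⟩
    have : m ≤ f y := sInf_le ⟨y, hy, rfl⟩
    rw [htop] at this
    exact le_top.trans this
  · have hne : Nonempty {c : EReal // m < c} := ⟨⟨⊤, lt_top_iff_ne_top.mpr htop⟩⟩
    set Z : {c : EReal // m < c} → Set ℝ := fun c => Icc (0 : ℝ) 1 ∩ f ⁻¹' Iic c.1 with hZ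
    have hZcl : ∀ c, IsClosed (Z c) := fun c =>
      isClosed_Icc.inter (hf.isClosed_preimage c.1)
    have hZc : ∀ c, IsCompact (Z c) := fun c =>
      isCompact_Icc.of_isClosed_subset (hZcl c) inter_subset_left
    have hZn : ∀ c, (Z c).Nonempty := by
      rintro ⟨c, hc⟩
      obtain ⟨y, ⟨x, hx, rfl⟩, hyc⟩ := sInf_lt_iff.mp hc
      exact ⟨x, hx, hyc.le⟩
    have hZd : Directed (· ⊇ ·) Z := by
      rintro ⟨c, hc⟩ ⟨d, hd⟩
      refine ⟨⟨min c d, lt_min hc hd⟩, ?_, ?_⟩ <;>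
        exact inter_subset_inter_right _ (preimage_mono (Iic_subset_Iic.mpr (by simp)))
    obtain ⟨x, hx⟩ := IsCompact.nonempty_iInter_of_directed_nonempty_isCompact_isClosed
      Z hZd hZn hZc hZcl
    have hxIcc : x ∈ Icc (0 : ℝ) 1 := (mem_iInter.mp hx ⟨⊤, lt_top_iff_ne_top.mpr htop⟩).1
    have hxm : f x ≤ m := by
      by_contra hcon
      push_neg at hcon
      obtain ⟨c, hmc, hcf⟩ := exists_between hcon
      exact hcf.not_ge (mem_iInter.mp hx ⟨c, hmc⟩).2
    exact ⟨x, hxIcc, fun y hy => hxm.trans (sInf_le ⟨y, hy, rfl⟩)⟩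

/-- Diewert's mean value theorem for improper extended-real-valued functions (part (a)):
if `φ_{a,b}` is l.s.c. and either `φ(a) = +∞` or `a, b ∈ dom φ`, then there is
`t ∈ [0,1)` with `φ(b) ⊖ φ(a) ≤ (φ_{a,b})↓(t,1)`. -/
theorem diewert_improper
    {X : Type*} [AddCommGroup X] [Module ℝ X]
    (φ : X → EReal) (a b : X) (hab : a ≠ b)
    (φab : ℝ → EReal)
    (hφab : φab = fun t : ℝ => if t ∈ Set.Icc (0 : ℝ) 1 then φ (a + t • (b - a)) else ⊤)
    (hlsc : LowerSemicontinuous φab)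
    (hcase : φ a = ⊤ ∨ (φ a ≠ ⊤ ∧ φ b ≠ ⊤)) :
    ∃ t ∈ Set.Ico (0 : ℝ) 1, eResid (φ b) (φ a) ≤ sDini φab t 1 := by
  have hφab0 : φab 0 = φ a := by simp [hφab]
  have hφab1 : φab 1 = φ b := by simp [hφab]
  have hout : ∀ t : ℝ, t ∉ Icc (0 : ℝ) 1 → φab t = ⊤ := by
    intro t ht; simp only [hφab, if_neg ht]
  -- trivial cases
  rcases hcase with hatop | ⟨hanetop, hbnetop⟩
  · exact ⟨0, ⟨le_rfl, zero_lt_one⟩, by rw [hatop, eResid_top_right]; exact bot_le⟩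
  by_cases hbbot : φ b = ⊥
  · exact ⟨0, ⟨le_rfl, zero_lt_one⟩, by rw [hbbot, eResid_bot_left]; exact bot_le⟩
  -- the set where φab = ⊥
  set B : Set ℝ := {t : ℝ | φab t ≤ ⊥} with hB
  have hBclosed : IsClosed B := hlsc.isClosed_preimage ⊥
  have hBsub : B ⊆ Icc (0 : ℝ) 1 := by
    intro t ht
    by_contra hnot
    rw [hB, mem_setOf_eq, hout t hnot] at ht
    exact (lt_irrefl _ (top_le_iff.mp (le_bot_iff.mp ht ▸ le_top) ▸ bot_lt_top))
  have h1notB : (1 : ℝ) ∉ B := by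
    rw [hB, mem_setOf_eq, hφab1]
    exact fun h => hbbot (le_bot_iff.mp h)
  by_cases hBne : B.Nonempty
  · -- φab hits ⊥ somewhere; take t₀ = sup of that set, Dini derivative is ⊤ there
    have hbdd : BddAbove B := (bddAbove_Icc).mono hBsub
    set t₀ : ℝ := sSup B with ht₀
    have ht₀B : t₀ ∈ B := hBclosed.csSup_mem hBne hbdd
    have ht₀Icc : t₀ ∈ Icc (0 : ℝ) 1 := hBsub ht₀B
    have ht₀lt : t₀ < 1 := lt_of_le_of_ne ht₀Icc.2 (fun h => h1notB (h ▸ ht₀B))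
    refine ⟨t₀, ⟨ht₀Icc.1, ht₀lt⟩, ?_⟩
    refine le_liminf_of_le (by isBoundedDefault) ?_
    filter_upwards [eventually_mem_nhdsWithin] with s (hs : s ∈ Ioi (0 : ℝ))
    have hsne : φab (t₀ + s * 1) ≠ ⊥ := by
      intro hcontra
      by_cases hmem : t₀ + s * 1 ∈ Icc (0 : ℝ) 1
      · have : t₀ + s * 1 ∈ B := by rw [hB, mem_setOf_eq, hcontra]
        have := le_csSup hbdd this
        rw [mul_one] at this
        linarith [mem_Ioi.mp hs]
      · rw [hout _ hmem] at hcontra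
        exact top_ne_bot hcontra
    have hbot : φab t₀ = ⊥ := le_bot_iff.mp ht₀B
    rw [hbot, eResid_bot_right hsne, EReal.coe_mul_top_of_pos (one_div_pos.mpr hs)]
    exact le_top
  · -- φab never ⊥; standard minimization argument
    have hnb : ∀ t : ℝ, ¬ φab t ≤ ⊥ := by
      intro t ht
      exact hBne ⟨t, ht⟩
    have habot : φ a ≠ ⊥ := by
      intro h
      exact hnb 0 (by rw [hφab0, h])
    set A : ℝ := (φ a).toReal with hAdef
    have hA : (A : EReal) = φ a := EReal.coe_toReal hanetop habot
    set Bv : ℝ := (φ b).toReal with hBvdef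
    have hBv : (Bv : EReal) = φ b := EReal.coe_toReal hbnetop hbbot
    set r : ℝ := Bv - A with hr
    set ψ : ℝ → EReal := fun t => φab t + ((-r * t : ℝ) : EReal) with hψdef
    have hψlsc : LowerSemicontinuous ψ := by
      refine hlsc.add' ?_ fun x => EReal.continuousAt_add (Or.inr (EReal.coe_ne_bot _))
        (Or.inr (EReal.coe_ne_top _))
      exact (continuous_coe_real_ereal.comp (by continuity)).lowerSemicontinuous
    have hψ0 : ψ 0 = φ a := by
      simp [hψdef, hφab0]
    have hψ1 : ψ 1 = φ a := by
      rw [hψdef]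
      simp only [mul_one]
      rw [hφab1, ← hBv, ← hA, ← EReal.coe_add]
      norm_cast
      rw [hr]; ring
    obtain ⟨t₁, ht₁Icc, ht₁min⟩ := lsc_exists_min_Icc ψ hψlsc
    obtain ⟨t₀, ht₀Ico, hmin⟩ :
        ∃ t₀ ∈ Ico (0 : ℝ) 1, ∀ y ∈ Icc (0 : ℝ) 1, ψ t₀ ≤ ψ y := by
      rcases ht₁Icc.2.lt_or_eq with h1 | h1
      · exact ⟨t₁, ⟨ht₁Icc.1, h1⟩, ht₁min⟩
      · refine ⟨0, ⟨le_rfl, zero_lt_one⟩, fun y hy => ?_⟩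
        rw [hψ0, ← hψ1, ← h1]
        exact ht₁min y hy
    have ht₀Icc : t₀ ∈ Icc (0 : ℝ) 1 := ⟨ht₀Ico.1, ht₀Ico.2.le⟩
    have ht₀le : ψ t₀ ≤ (A : EReal) := by
      rw [hA, ← hψ0]
      exact hmin 0 ⟨le_rfl, zero_le_one⟩
    have ht₀netop : φab t₀ ≠ ⊤ := by
      intro h
      rw [hψdef] at ht₀le
      simp only [h, EReal.top_add_coe] at ht₀le
      exact (EReal.coe_lt_top A).not_ge ht₀le
    have ht₀nebot : φab t₀ ≠ ⊥ := fun h => hnb t₀ (le_of_eq h)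
    set c : ℝ := (φab t₀).toReal with hcdef
    have hc : (c : EReal) = φab t₀ := EReal.coe_toReal ht₀netop ht₀nebot
    refine ⟨t₀, ht₀Ico, ?_⟩
    refine le_liminf_of_le (by isBoundedDefault) ?_
    filter_upwards [Ioo_mem_nhdsGT_of_mem (Set.left_mem_Ico.mpr (by linarith [ht₀Ico.2]) :
      (0 : ℝ) ∈ Ico (0 : ℝ) (1 - t₀))] with s hs
    have hspos : (0 : ℝ) < s := hs.1
    have hyIcc : t₀ + s * 1 ∈ Icc (0 : ℝ) 1 := by
      constructor
      · have := ht₀Ico.1; nlinarith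
      · have := hs.2; nlinarith
    rw [← hA, ← hBv, eResid_coe_coe]
    by_cases hyt : φab (t₀ + s * 1) = ⊤
    · rw [hyt, eResid_top_left (hc ▸ EReal.coe_ne_top c),
        EReal.coe_mul_top_of_pos (one_div_pos.mpr hspos)]
      exact le_top
    · have hynb : φab (t₀ + s * 1) ≠ ⊥ := fun h => hnb _ (le_of_eq h)
      set d : ℝ := (φab (t₀ + s * 1)).toReal with hddef
      have hd : (d : EReal) = φab (t₀ + s * 1) := EReal.coe_toReal hyt hynb
      have hineq : ψ t₀ ≤ ψ (t₀ + s * 1) := hmin _ hyIcc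
      rw [hψdef] at hineq
      simp only [← hc, ← hd, ← EReal.coe_add, EReal.coe_le_coe_iff] at hineq
      have hds : r * s ≤ d - c := by nlinarith
      rw [← hd, ← hc, eResid_coe_coe, ← EReal.coe_mul, EReal.coe_le_coe_iff]
      rw [one_div, inv_mul_eq_div, le_div_iff₀ hspos]
      rw [hr] at hds
      linarith
end

section
/- Let φ : X → ℝ ∪ {±∞} be radially lower semicontinuous at every point and a ∈ dom φ. If the lower Dini derivative satisfies φ↓(b, a - b) ≤ 0 for all b ∈ X, then φ(a) = inf_{x ∈ X} φ(x); moreover either φ(a) = -∞, or φ is proper and dom φ is star-shaped at a. -/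
open Filter Set

/-- Lower Dini directional derivative of `φ : X → EReal` at `x` in direction `u`. -/
noncomputable def vDini {X : Type*} [AddCommGroup X] [Module ℝ X]
    (φ : X → EReal) (x u : X) : EReal :=
  Filter.liminf (fun t : ℝ => ((1 / t : ℝ) : EReal) * eResid (φ (x + t • u)) (φ x))
    (nhdsWithin 0 (Set.Ioi 0))

lemma infAdd_le_add (s : EReal) (hs : s ≠ ⊤) (t : ℝ) : infAdd s (t : EReal) ≤ s + t := by
  induction s using EReal.rec with
  | bot =>
    rw [EReal.bot_add]
    by_contra h
    obtain ⟨y, -, hy2⟩ := EReal.exists_between_coe_real (not_le.mp h)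
    have hmem : ((y : ℝ) : EReal) ∈ {x : EReal | ∃ a b : ℝ,
        x = ((a + b : ℝ) : EReal) ∧ (⊥ : EReal) ≤ (a : EReal) ∧ (t : EReal) ≤ (b : EReal)} :=
      ⟨y - t, t, by norm_num, bot_le, le_refl _⟩
    exact absurd (sInf_le hmem) (not_le.mpr hy2)
  | coe s =>
    have hmem : ((s + t : ℝ) : EReal) ∈ {x : EReal | ∃ a b : ℝ,
        x = ((a + b : ℝ) : EReal) ∧ ((s : ℝ) : EReal) ≤ (a : EReal) ∧ (t : EReal) ≤ (b : EReal)} :=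
      ⟨s, t, rfl, le_refl _, le_refl _⟩
    exact le_trans (sInf_le hmem) (by rw [EReal.coe_add])
  | top => exact absurd rfl hs

lemma eResid_lt_imp (r s : EReal) (hs : s ≠ ⊤) (c : ℝ) (h : eResid r s < (c : EReal)) :
    r ≤ s + c := by
  obtain ⟨x, hx, hxc⟩ := sInf_lt_iff.mp h
  obtain ⟨t, rfl, hrt⟩ := hx
  have htc : t ≤ c := le_of_lt (EReal.coe_lt_coe_iff.mp hxc)
  calc r ≤ infAdd s (t : EReal) := hrt
    _ ≤ s + t := infAdd_le_add s hs t
    _ ≤ s + c := add_le_add_right (EReal.coe_le_coe_iff.mpr htc) s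

lemma ediv_lt_imp {t d : ℝ} (ht : 0 < t) (q : EReal)
    (h : ((1 / t : ℝ) : EReal) * q < (d : EReal)) : q < ((t * d : ℝ) : EReal) := by
  induction q using EReal.rec with
  | bot => exact EReal.bot_lt_coe _
  | coe x =>
    rw [← EReal.coe_mul, EReal.coe_lt_coe_iff] at h
    rw [EReal.coe_lt_coe_iff]
    have := mul_lt_mul_of_pos_left h ht
    calc x = t * (1 / t * x) := by field_simp
      _ < t * d := this
  | top =>
    rw [EReal.mul_top_of_pos (by exact_mod_cast EReal.coe_pos.mpr (by positivity))] at h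
    exact absurd h (by simp)

lemma le_of_forall_add_le' {x y : EReal} (h : ∀ ε : ℝ, 0 < ε → x ≤ y + (ε : EReal)) :
    x ≤ y := by
  induction y using EReal.rec with
  | bot =>
    have := h 1 one_pos
    rwa [EReal.bot_add] at this
  | coe y =>
    induction x using EReal.rec with
    | bot => exact bot_le
    | coe x =>
      rw [EReal.coe_le_coe_iff]
      by_contra hc
      have := h ((x - y) / 2) (by linarith [not_le.mp hc])
      rw [← EReal.coe_add, EReal.coe_le_coe_iff] at this
      linarith [not_le.mp hc]
    | top =>
      have := h 1 one_pos
      rw [← EReal.coe_add] at this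
      exact absurd (top_le_iff.mp this) (EReal.coe_ne_top _)
  | top => exact le_top

/-- If `φ` is radially l.s.c. (at every point) and `φ↓(b, a-b) ≤ 0` for all `b`, where
`a ∈ dom φ`, then the infimum of `φ` is attained at `a`; moreover either `φ(a) = -∞` or
`φ` is proper and `dom φ` is star-shaped at `a`. -/
theorem attainment_if_dini_nonpos
    {X : Type*} [AddCommGroup X] [Module ℝ X]
    (φ : X → EReal) (a : X) (ha : φ a ≠ ⊤)
    (hradlsc : ∀ x b : X, LowerSemicontinuous
      (fun t : ℝ => if t ∈ Set.Icc (0 : ℝ) 1 then φ (x + t • (b - x)) else ⊤))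
    (hdini : ∀ b : X, vDini φ b (a - b) ≤ 0) :
    (∀ x : X, φ a ≤ φ x) ∧
      (φ a = ⊥ ∨
        ((∀ x : X, φ x ≠ ⊥) ∧
          ∀ x : X, φ x ≠ ⊤ → ∀ t ∈ Set.Icc (0 : ℝ) 1, φ (t • a + (1 - t) • x) ≠ ⊤)) := by
  have key : ∀ b : X, φ b ≠ ⊤ → ∀ ε : ℝ, 0 < ε → ∀ t₀ : ℝ, t₀ ∈ Set.Icc (0 : ℝ) 1 →
      φ (b + t₀ • (a - b)) ≤ φ b + ((ε * t₀ : ℝ) : EReal) := by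
    intro b hb ε hε t₀ ht₀
    have hlsc := hradlsc b a
    set ψ : ℝ → EReal := fun t : ℝ => if t ∈ Set.Icc (0 : ℝ) 1 then φ (b + t • (a - b)) else ⊤
      with hψ
    set S := {t : ℝ | t ∈ Set.Icc (0 : ℝ) t₀ ∧ ψ t ≤ φ b + ((ε * t : ℝ) : EReal)} with hS
    have h0S : (0 : ℝ) ∈ S := by
      refine ⟨⟨le_refl _, ht₀.1⟩, ?_⟩
      have : ψ 0 = φ b := by
        rw [hψ]
        simp [zero_le_one]
      rw [this]
      simp
    have hne : S.Nonempty := ⟨0, h0S⟩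
    have hbdd : BddAbove S := ⟨t₀, fun x hx => hx.1.2⟩
    set c := sSup S with hc
    have hc0 : 0 ≤ c := le_csSup hbdd h0S
    have hct₀ : c ≤ t₀ := csSup_le hne fun x hx => hx.1.2
    have hcI : c ∈ Set.Icc (0 : ℝ) 1 := ⟨hc0, hct₀.trans ht₀.2⟩
    have hψc : ψ c = φ (b + c • (a - b)) := by rw [hψ]; simp [hcI]
    -- the supremum itself satisfies the bound, by lower semicontinuity
    have hcS : c ∈ S := by
      refine ⟨⟨hc0, hct₀⟩, ?_⟩
      by_contra hcon
      have hcon' : φ b + ((ε * c : ℝ) : EReal) < ψ c := not_le.mp hcon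
      obtain ⟨y, hy1, hy2⟩ := EReal.exists_between_coe_real hcon'
      have hev := hlsc c (y : EReal) hy2
      rw [Metric.eventually_nhds_iff] at hev
      obtain ⟨δ, hδ, hball⟩ := hev
      obtain ⟨s, hsS, hs⟩ := exists_lt_of_lt_csSup hne (sub_lt_self c hδ)
      have hsc : s ≤ c := le_csSup hbdd hsS
      have hdist : dist s c < δ := by
        rw [Real.dist_eq, abs_lt]; constructor <;> linarith
      have h1 : (y : EReal) < ψ s := hball hdist
      have h2 : ψ s ≤ φ b + ((ε * c : ℝ) : EReal) := by
        refine le_trans hsS.2 (add_le_add_right ?_ (φ b))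
        exact EReal.coe_le_coe_iff.mpr (by nlinarith)
      exact absurd (h1.trans_le h2) (not_lt.mpr hy1.le)
    have hψc_ne_top : ψ c ≠ ⊤ := by
      intro h
      have := hcS.2
      rw [h] at this
      exact absurd (top_le_iff.mp this) (EReal.add_lt_top hb (EReal.coe_ne_top _)).ne
    rcases eq_or_lt_of_le hct₀ with heq | hlt
    · have := hcS.2
      rw [hψc, heq] at this
      exact this
    · exfalso
      have hc1 : c < 1 := lt_of_lt_of_le hlt ht₀.2
      have hd := hdini (b + c • (a - b))
      have hdir : a - (b + c • (a - b)) = (1 - c) • (a - b) := by module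
      rw [hdir] at hd
      unfold vDini at hd
      have hpos : (0 : EReal) < ((ε * (1 - c) : ℝ) : EReal) :=
        EReal.coe_pos.mpr (by nlinarith)
      have hfreq := frequently_lt_of_liminf_lt (u := fun t : ℝ =>
          ((1 / t : ℝ) : EReal) * eResid (φ (b + c • (a - b) + t • ((1 - c) • (a - b))))
            (φ (b + c • (a - b)))) (f := nhdsWithin 0 (Set.Ioi 0))
          (by isBoundedDefault) (lt_of_le_of_lt hd hpos)
      have hev : ∀ᶠ t in nhdsWithin (0 : ℝ) (Set.Ioi 0),
          t ∈ Set.Ioo (0 : ℝ) ((t₀ - c) / (1 - c)) :=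
        Ioo_mem_nhdsGT_of_mem ⟨le_refl _, div_pos (by linarith) (by linarith)⟩
      obtain ⟨t, hq, htI⟩ := (hfreq.and_eventually hev).exists
      have ht : 0 < t := htI.1
      have ht2 : t * (1 - c) < t₀ - c := (lt_div_iff₀ (by linarith)).mp htI.2
      set c' := c + t * (1 - c) with hc'
      have hcc' : c < c' := by nlinarith
      have hc't₀ : c' ≤ t₀ := by simp only [hc']; linarith
      have hc'I : c' ∈ Set.Icc (0 : ℝ) 1 := ⟨by linarith, hc't₀.trans ht₀.2⟩
      have harg : b + c • (a - b) + t • ((1 - c) • (a - b)) = b + c' • (a - b) := by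
        rw [hc']; module
      rw [harg] at hq
      have hψc' : ψ c' = φ (b + c' • (a - b)) := by rw [hψ]; simp [hc'I]
      have hq2 : eResid (ψ c') (ψ c) < ((t * (ε * (1 - c)) : ℝ) : EReal) := by
        rw [hψc, hψc']
        exact ediv_lt_imp ht _ hq
      have hle : ψ c' ≤ ψ c + ((t * (ε * (1 - c)) : ℝ) : EReal) :=
        eResid_lt_imp _ _ hψc_ne_top _ hq2
      have hle2 : ψ c' ≤ φ b + ((ε * c' : ℝ) : EReal) := by
        calc ψ c' ≤ ψ c + ((t * (ε * (1 - c)) : ℝ) : EReal) := hle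
          _ ≤ (φ b + ((ε * c : ℝ) : EReal)) + ((t * (ε * (1 - c)) : ℝ) : EReal) :=
            add_le_add_left hcS.2 _
          _ = φ b + ((ε * c' : ℝ) : EReal) := by
            rw [add_assoc, ← EReal.coe_add]
            congr 2
            rw [hc']; ring
      have hc'S : c' ∈ S := ⟨⟨by linarith, hc't₀⟩, hle2⟩
      exact absurd (le_csSup hbdd hc'S) (not_le.mpr hcc')
  have hmin : ∀ x : X, φ a ≤ φ x := by
    intro x
    by_cases hx : φ x = ⊤
    · rw [hx]; exact le_top
    · apply le_of_forall_add_le'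
      intro ε hε
      have := key x hx ε hε 1 ⟨zero_le_one, le_refl _⟩
      rwa [one_smul, add_sub_cancel, mul_one] at this
  refine ⟨hmin, ?_⟩
  by_cases hab : φ a = ⊥
  · exact Or.inl hab
  · refine Or.inr ⟨fun x hx => hab (le_bot_iff.mp (hx ▸ hmin x)), ?_⟩
    intro x hx t htI
    have heq : t • a + (1 - t) • x = x + t • (a - x) := by module
    rw [heq]
    intro htop
    have := key x hx 1 one_pos t htI
    rw [htop] at this
    exact absurd (top_le_iff.mp this) (EReal.add_lt_top hx (EReal.coe_ne_top _)).ne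
end

section
/- For φ : X → ℝ ∪ {±∞}, the strict sublevel set L^<_φ(φ(x)) ∪ {x} is star-shaped at x for every x ∈ dom φ if and only if φ is semistrictly quasiconvex. -/
open Set

/-- `L^<_φ(φ(x)) ∪ {x}` is star-shaped at `x` for every `x ∈ dom φ` iff `φ` is
semistrictly quasiconvex. -/
theorem starShaped_strict_sublevel_iff_semistrictlyQuasiconvex
    {X : Type*} [AddCommGroup X] [Module ℝ X] (φ : X → EReal) :
    (∀ x : X, φ x ≠ ⊤ →
      ∀ y ∈ ({y : X | φ y < φ x} ∪ {x} : Set X), ∀ t ∈ Set.Icc (0 : ℝ) 1,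
        x + t • (y - x) ∈ ({y : X | φ y < φ x} ∪ {x} : Set X)) ↔
    (∀ a b : X, φ a ≠ ⊤ → φ b ≠ ⊤ → φ a ≠ φ b →
      ∀ t ∈ Set.Ioo (0 : ℝ) 1, φ (a + t • (b - a)) < max (φ a) (φ b)) := by
  constructor
  · intro h a b ha hb hab t ht
    rcases lt_or_gt_of_ne hab with hlt | hgt
    · -- φ a < φ b : use x = b, y = a, parameter 1 - t
      have key := h b hb a (Or.inl hlt) (1 - t) ⟨by linarith [ht.2], by linarith [ht.1]⟩
      have heq : b + (1 - t) • (a - b) = a + t • (b - a) := by module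
      rw [heq] at key
      rcases key with hk | hk
      · exact lt_of_lt_of_le hk (le_max_right _ _)
      · exfalso
        have : a + t • (b - a) = b := hk
        have h2 : (1 - t) • (a - b) = 0 := by
          have : b + (1 - t) • (a - b) = b := by rw [heq, this]
          linear_combination (norm := abel) this
        have h3 : a - b = 0 := by
          have hne : (1 - t : ℝ) ≠ 0 := by have := ht.2; intro h'; linarith [sub_eq_zero.mp h']
          exact (smul_eq_zero.mp h2).resolve_left hne
        rw [sub_eq_zero] at h3
        exact hab (by rw [h3])
    · -- φ b < φ a : use x = a, y = b
      have key := h a ha b (Or.inl hgt) t ⟨le_of_lt ht.1, le_of_lt ht.2⟩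
      rcases key with hk | hk
      · exact lt_of_lt_of_le hk (le_max_left _ _)
      · exfalso
        have h2 : t • (b - a) = 0 := by
          have : a + t • (b - a) = a := hk
          linear_combination (norm := abel) this
        have h3 : b - a = 0 := (smul_eq_zero.mp h2).resolve_left (ne_of_gt ht.1)
        rw [sub_eq_zero] at h3
        exact hab (by rw [h3])
  · intro h x hx y hy t ht
    rcases hy with hy | hy
    · -- φ y < φ x
      have hy' : φ y < φ x := hy
      rcases eq_or_lt_of_le ht.1 with h0 | h0
      · right; simp [← h0]
      rcases eq_or_lt_of_le ht.2 with h1 | h1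
      · left; simpa [h1] using hy'
      have hyx : φ y ≠ φ x := ne_of_lt hy'
      have hyT : φ y ≠ ⊤ := ne_top_of_lt hy' 
      have := h x y hx hyT (Ne.symm hyx) t ⟨h0, h1⟩
      left
      have : φ (x + t • (y - x)) < max (φ x) (φ y) := this
      simpa [max_eq_left hy'.le] using this
    · right; simp only [mem_singleton_iff] at hy ⊢; simp [hy]
end

section
/- Let φ : X → ℝ ∪ {±∞} be radially lower semicontinuous at a ∈ X. Then φ is radially quasiconvex at a if and only if for all b ∈ X and r ∈ ℝ ∪ {±∞} the set {t ∈ [0,1] | φ(a + t(b-a)) ≤ r} is a closed interval (possibly empty). In this case {s ∈ [0,1] | φ(a + s(b-a)) = inf_{t ∈ [0,1]} φ(a + t(b-a))} is a nonempty closed interval for each b. -/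
open Set

/-- Radial restriction of `φ` to the segment `[a,b]`, extended by `+∞`. -/
noncomputable def radRestr {X : Type*} [AddCommGroup X] [Module ℝ X]
    (φ : X → EReal) (a b : X) : ℝ → EReal :=
  fun t : ℝ => if t ∈ Set.Icc (0 : ℝ) 1 then φ (a + t • (b - a)) else ⊤

/-- Quasiconvexity of an extended-real-valued function on `ℝ`. -/
def QCone (ψ : ℝ → EReal) : Prop :=
  ∀ s t : ℝ, ∀ l ∈ Set.Ioo (0 : ℝ) 1, ψ (s + l * (t - s)) ≤ max (ψ s) (ψ t)

section Aux

variable {X : Type*} [AddCommGroup X] [Module ℝ X] (φ : X → EReal) (a b : X)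

lemma radRestr_of_mem {t : ℝ} (ht : t ∈ Set.Icc (0 : ℝ) 1) :
    radRestr φ a b t = φ (a + t • (b - a)) := if_pos ht

lemma radRestr_of_notMem {t : ℝ} (ht : t ∉ Set.Icc (0 : ℝ) 1) :
    radRestr φ a b t = ⊤ := if_neg ht

lemma sub_eq (r : EReal) :
    {t : ℝ | t ∈ Set.Icc (0 : ℝ) 1 ∧ φ (a + t • (b - a)) ≤ r}
      = Set.Icc (0 : ℝ) 1 ∩ (radRestr φ a b) ⁻¹' Iic r := by
  ext t
  simp only [mem_setOf_eq, mem_inter_iff, mem_preimage, mem_Iic]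
  constructor
  · rintro ⟨h1, h2⟩; exact ⟨h1, by rwa [radRestr_of_mem φ a b h1]⟩
  · rintro ⟨h1, h2⟩; exact ⟨h1, by rwa [radRestr_of_mem φ a b h1] at h2⟩

lemma sub_closed (hlsc : LowerSemicontinuous (radRestr φ a b)) (r : EReal) :
    IsClosed {t : ℝ | t ∈ Set.Icc (0 : ℝ) 1 ∧ φ (a + t • (b - a)) ≤ r} := by
  rw [sub_eq]
  exact isClosed_Icc.inter (hlsc.isClosed_preimage r)

lemma sub_convex (hq : QCone (radRestr φ a b)) (r : EReal) :
    Convex ℝ {t : ℝ | t ∈ Set.Icc (0 : ℝ) 1 ∧ φ (a + t • (b - a)) ≤ r} := by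
  rintro x ⟨hx1, hx2⟩ y ⟨hy1, hy2⟩ p q hp hq' hpq
  have hz : p • x + q • y ∈ Set.Icc (0 : ℝ) 1 := (convex_Icc 0 1) hx1 hy1 hp hq' hpq
  refine ⟨hz, ?_⟩
  rcases eq_or_lt_of_le hq' with h0 | h0
  · have hp1 : p = 1 := by linarith
    have : p • x + q • y = x := by rw [← h0, hp1]; simp
    rw [this]; exact hx2
  rcases eq_or_lt_of_le hp with h1 | h1
  · have hq1 : q = 1 := by linarith
    have : p • x + q • y = y := by rw [← h1, hq1]; simp
    rw [this]; exact hy2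
  · have hq1 : q < 1 := by linarith
    have key := hq x y q ⟨h0, hq1⟩
    have hzeq : x + q * (y - x) = p • x + q • y := by
      have hp' : p = 1 - q := by linarith
      simp only [smul_eq_mul, hp']; ring
    rw [hzeq, radRestr_of_mem φ a b hz, radRestr_of_mem φ a b hx1,
      radRestr_of_mem φ a b hy1] at key
    exact key.trans (max_le hx2 hy2)

lemma exists_min (hlsc : LowerSemicontinuous (radRestr φ a b)) :
    ∃ s ∈ Set.Icc (0 : ℝ) 1,
      φ (a + s • (b - a)) =
        sInf ((fun t : ℝ => φ (a + t • (b - a))) '' Set.Icc (0 : ℝ) 1) := by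
  set m := sInf ((fun t : ℝ => φ (a + t • (b - a))) '' Set.Icc (0 : ℝ) 1) with hm_def
  have hmem : ∀ s ∈ Set.Icc (0 : ℝ) 1, m ≤ φ (a + s • (b - a)) :=
    fun s hs => sInf_le ⟨s, hs, rfl⟩
  by_cases htop : m = ⊤
  · refine ⟨0, left_mem_Icc.2 zero_le_one, ?_⟩
    exact le_antisymm (htop ▸ le_top) (hmem 0 (left_mem_Icc.2 zero_le_one))
  · have hm : m < ⊤ := Ne.lt_top htop
    set Z : {r : EReal // m < r} → Set ℝ :=
      fun r => {t : ℝ | t ∈ Set.Icc (0 : ℝ) 1 ∧ φ (a + t • (b - a)) ≤ r.1} with hZ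
    have hne : ∀ r, (Z r).Nonempty := by
      rintro ⟨r, hr⟩
      rw [hm_def] at hr
      obtain ⟨y, ⟨s, hs, rfl⟩, hy⟩ := sInf_lt_iff.1 hr
      exact ⟨s, hs, hy.le⟩
    have hcl : ∀ r, IsClosed (Z r) := fun r => sub_closed φ a b hlsc r.1
    have hcpt : ∀ r, IsCompact (Z r) :=
      fun r => isCompact_Icc.of_isClosed_subset (hcl r) (fun t ht => ht.1)
    have hdir : Directed (· ⊇ ·) Z := by
      rintro ⟨r, hr⟩ ⟨r', hr'⟩
      exact ⟨⟨min r r', lt_min hr hr'⟩,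
        fun t ht => ⟨ht.1, ht.2.trans (min_le_left _ _)⟩,
        fun t ht => ⟨ht.1, ht.2.trans (min_le_right _ _)⟩⟩
    have : Nonempty {r : EReal // m < r} := ⟨⟨⊤, hm⟩⟩
    obtain ⟨s, hs⟩ :=
      IsCompact.nonempty_iInter_of_directed_nonempty_isCompact_isClosed Z hdir hne hcpt hcl
    simp only [mem_iInter] at hs
    have hs1 : s ∈ Set.Icc (0 : ℝ) 1 := (hs ⟨⊤, hm⟩).1
    refine ⟨s, hs1, le_antisymm ?_ (hmem s hs1)⟩
    exact le_of_forall_gt_imp_ge_of_dense fun r hr => (hs ⟨r, hr⟩).2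

end Aux

/-- Let `φ` be radially l.s.c. at `a`. Then `φ` is radially quasiconvex at `a` iff
for all `b` and `r` the set `{t ∈ [0,1] | φ(a+t(b-a)) ≤ r}` is a closed interval
(i.e. closed and convex, possibly empty).  In that case the set of minimizers
`{s ∈ [0,1] | φ(a+s(b-a)) = inf_{t∈[0,1]} φ(a+t(b-a))}` is a nonempty closed interval. -/
theorem radially_quasiconvex_iff_closed_intervals
    {X : Type*} [AddCommGroup X] [Module ℝ X]
    (φ : X → EReal) (a : X)
    (hradlsc : ∀ b : X, LowerSemicontinuous (radRestr φ a b)) :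
    ((∀ b : X, QCone (radRestr φ a b)) ↔
      (∀ b : X, ∀ r : EReal,
        IsClosed {t : ℝ | t ∈ Set.Icc (0 : ℝ) 1 ∧ φ (a + t • (b - a)) ≤ r} ∧
        Convex ℝ {t : ℝ | t ∈ Set.Icc (0 : ℝ) 1 ∧ φ (a + t • (b - a)) ≤ r})) ∧
    ((∀ b : X, QCone (radRestr φ a b)) →
      ∀ b : X,
        ({s : ℝ | s ∈ Set.Icc (0 : ℝ) 1 ∧
            φ (a + s • (b - a)) =
              sInf ((fun t : ℝ => φ (a + t • (b - a))) '' Set.Icc (0 : ℝ) 1)}).Nonempty ∧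
        IsClosed {s : ℝ | s ∈ Set.Icc (0 : ℝ) 1 ∧
            φ (a + s • (b - a)) =
              sInf ((fun t : ℝ => φ (a + t • (b - a))) '' Set.Icc (0 : ℝ) 1)} ∧
        Convex ℝ {s : ℝ | s ∈ Set.Icc (0 : ℝ) 1 ∧
            φ (a + s • (b - a)) =
              sInf ((fun t : ℝ => φ (a + t • (b - a))) '' Set.Icc (0 : ℝ) 1)}) := by
  constructor
  · constructor
    · intro hq b r
      exact ⟨sub_closed φ a b (hradlsc b) r, sub_convex φ a b (hq b) r⟩
    · intro hconv b s t l hl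
      by_cases hs : s ∈ Set.Icc (0 : ℝ) 1
      · by_cases ht : t ∈ Set.Icc (0 : ℝ) 1
        · have hu : s + l * (t - s) ∈ Set.Icc (0 : ℝ) 1 := by
            have : s + l * (t - s) = (1 - l) • s + l • t := by
              simp only [smul_eq_mul]; ring
            rw [this]
            exact (convex_Icc 0 1) hs ht (by linarith [hl.2]) hl.1.le (by ring)
          set r : EReal := max (radRestr φ a b s) (radRestr φ a b t) with hr
          have hsS : s ∈ {x : ℝ | x ∈ Set.Icc (0 : ℝ) 1 ∧ φ (a + x • (b - a)) ≤ r} :=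
            ⟨hs, by rw [← radRestr_of_mem φ a b hs]; exact le_max_left _ _⟩
          have htS : t ∈ {x : ℝ | x ∈ Set.Icc (0 : ℝ) 1 ∧ φ (a + x • (b - a)) ≤ r} :=
            ⟨ht, by rw [← radRestr_of_mem φ a b ht]; exact le_max_right _ _⟩
          have hconv' := (hconv b r).2
          have huS := hconv' hsS htS (by linarith [hl.2] : (0:ℝ) ≤ 1 - l) hl.1.le
            (by ring : (1 - l) + l = 1)
          have heq : (1 - l) • s + l • t = s + l * (t - s) := by
            simp only [smul_eq_mul]; ring
          rw [heq] at huS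
          rw [radRestr_of_mem φ a b hu]
          exact huS.2
        · rw [radRestr_of_notMem φ a b ht]
          exact le_top.trans (le_max_right _ _)
      · rw [radRestr_of_notMem φ a b hs]
        exact le_top.trans (le_max_left _ _)
  · intro hq b
    obtain ⟨s0, hs0, hs0eq⟩ := exists_min φ a b (hradlsc b)
    refine ⟨⟨s0, hs0, hs0eq⟩, ?_, ?_⟩
    all_goals {
      have hset : {s : ℝ | s ∈ Set.Icc (0 : ℝ) 1 ∧
          φ (a + s • (b - a)) =
            sInf ((fun t : ℝ => φ (a + t • (b - a))) '' Set.Icc (0 : ℝ) 1)}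
        = {s : ℝ | s ∈ Set.Icc (0 : ℝ) 1 ∧
            φ (a + s • (b - a)) ≤
              sInf ((fun t : ℝ => φ (a + t • (b - a))) '' Set.Icc (0 : ℝ) 1)} := by
        ext s
        simp only [mem_setOf_eq, and_congr_right_iff]
        intro hsmem
        exact ⟨le_of_eq, fun h => le_antisymm h (sInf_le ⟨s, hsmem, rfl⟩)⟩
      rw [hset]
      first
        | exact sub_closed φ a b (hradlsc b) _
        | exact sub_convex φ a b (hq b) _
    }
end

section
/- Let φ : X → ℝ ∪ {±∞} be radially pseudoconvex and radially lower semicontinuous at a ∈ dom φ, and suppose dom φ is star-shaped at a. Then φ is radially semistrictly quasiconvex at a. -/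
open Filter Set

/-- Pseudoconvexity (via the lower Dini derivative) of a function on `ℝ`. -/
noncomputable def PCone (ψ : ℝ → EReal) : Prop :=
  ∀ u v : ℝ, ψ u < ψ v → sDini ψ v (u - v) < 0

/-- Semistrict quasiconvexity of an extended-real-valued function on `ℝ`. -/
def SSQCone (ψ : ℝ → EReal) : Prop :=
  ∀ s t : ℝ, ψ s ≠ ⊤ → ψ t ≠ ⊤ → ψ s ≠ ψ t →
    ∀ l ∈ Set.Ioo (0 : ℝ) 1, ψ (s + l * (t - s)) < max (ψ s) (ψ t)

lemma descent_of_PCone (ψ : ℝ → EReal) (hpc : PCone ψ) (p q : ℝ)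
    (hq : ψ q ≠ ⊤) (hlt : ψ p < ψ q) (ε : ℝ) (hε : 0 < ε) :
    ∃ d ∈ Ioo (0:ℝ) ε, ψ (q + d * (p - q)) < ψ q := by
  have hd := hpc p q hlt
  rw [sDini] at hd
  have hfreq : ∃ᶠ t in nhdsWithin (0:ℝ) (Set.Ioi 0),
      ((1/t : ℝ):EReal) * eResid (ψ (q + t*(p-q))) (ψ q) < 0 :=
    frequently_lt_of_liminf_lt (by isBoundedDefault) hd
  have hev : ∀ᶠ t in nhdsWithin (0:ℝ) (Set.Ioi 0), t ∈ Ioo (0:ℝ) ε :=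
    Ioo_mem_nhdsGT_of_mem ⟨le_refl 0, hε⟩
  obtain ⟨d, hdlt, hdmem⟩ := (hfreq.and_eventually hev).exists
  refine ⟨d, hdmem, ?_⟩
  have h1 : eResid (ψ (q + d*(p-q))) (ψ q) < 0 := by
    by_contra h
    push_neg at h
    rcases eq_or_lt_of_le h with h' | h'
    · rw [← h', mul_zero] at hdlt
      exact lt_irrefl _ hdlt
    · have : (0:EReal) < ((1/d : ℝ):EReal) * eResid (ψ (q + d*(p-q))) (ψ q) :=
        EReal.mul_pos (by exact_mod_cast (one_div_pos.mpr hdmem.1)) h'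
      exact absurd hdlt (not_lt.2 this.le)
  have hqbot : ψ q ≠ ⊥ := (lt_of_le_of_lt bot_le hlt).ne'
  have hA : ((ψ q).toReal : EReal) = ψ q := EReal.coe_toReal hq hqbot
  set A := (ψ q).toReal
  rw [eResid, sInf_lt_iff] at h1
  obtain ⟨x, ⟨t₀, rfl, hle⟩, hx0⟩ := h1
  have ht₀ : t₀ < 0 := by exact_mod_cast hx0
  have h2 : infAdd (ψ q) (t₀ : EReal) ≤ ((A + t₀ : ℝ) : EReal) := by
    apply sInf_le
    exact ⟨A, t₀, rfl, le_of_eq hA.symm, le_refl _⟩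
  have h3 : ψ (q + d*(p-q)) ≤ ((A + t₀ : ℝ) : EReal) := le_trans hle h2
  calc ψ (q + d*(p-q)) ≤ ((A + t₀ : ℝ) : EReal) := h3
    _ < (A : EReal) := by exact_mod_cast (by linarith : A + t₀ < A)
    _ = ψ q := hA

lemma exists_min_Icc (ψ : ℝ → EReal) (hlsc : LowerSemicontinuous ψ) (p q : ℝ) (hpq : p ≤ q) :
    ∃ r ∈ Icc p q, ∀ z ∈ Icc p q, ψ r ≤ ψ z := by
  set μ := sInf (ψ '' Icc p q) with hμ
  by_cases htop : μ = ⊤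
  · refine ⟨p, ⟨le_refl p, hpq⟩, fun z hz => ?_⟩
    have : ψ z = ⊤ := top_le_iff.1 (htop ▸ sInf_le ⟨z, hz, rfl⟩)
    simp [this]
  · set T : {c : EReal // μ < c} → Set ℝ := fun c => Icc p q ∩ {y | ψ y ≤ c.1} with hT
    have hclosed : ∀ c, IsClosed (T c) := fun c => isClosed_Icc.inter (hlsc.isClosed_preimage c.1)
    have hcompact : ∀ c, IsCompact (T c) :=
      fun c => isCompact_Icc.inter_right (hlsc.isClosed_preimage c.1)
    have hnonempty : ∀ c, (T c).Nonempty := by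
      intro c
      have h2 : sInf (ψ '' Icc p q) < c.1 := c.2
      rw [sInf_lt_iff] at h2
      obtain ⟨x, ⟨z, hz, rfl⟩, hx⟩ := h2
      exact ⟨z, hz, hx.le⟩
    have hdir : Directed (· ⊇ ·) T := by
      intro c d
      rcases le_total c.1 d.1 with h | h
      · exact ⟨c, subset_refl _, fun y hy => ⟨hy.1, le_trans hy.2 h⟩⟩
      · exact ⟨d, fun y hy => ⟨hy.1, le_trans hy.2 h⟩, subset_refl _⟩
    have hnty : Nonempty {c : EReal // μ < c} := ⟨⟨⊤, lt_top_iff_ne_top.2 htop⟩⟩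
    obtain ⟨r, hr⟩ := IsCompact.nonempty_iInter_of_directed_nonempty_isCompact_isClosed
      T hdir hnonempty hcompact hclosed
    simp only [mem_iInter] at hr
    have hrIcc : r ∈ Icc p q := (hr ⟨⊤, lt_top_iff_ne_top.2 htop⟩).1
    refine ⟨r, hrIcc, fun z hz => ?_⟩
    have h1 : ψ r ≤ μ := by
      apply le_of_forall_gt_imp_ge_of_dense
      intro c hc
      exact (hr ⟨c, hc⟩).2
    exact h1.trans (sInf_le ⟨z, hz, rfl⟩)

lemma qc_lemma (ψ : ℝ → EReal) (hlsc : LowerSemicontinuous ψ)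
    (hdes : ∀ p q : ℝ, ψ q ≠ ⊤ → ψ p < ψ q → ∀ ε > (0:ℝ),
      ∃ d ∈ Ioo (0:ℝ) ε, ψ (q + d * (p - q)) < ψ q)
    (u v x : ℝ) (hux : u < x) (hxv : x < v)
    (hdom : ∀ y ∈ Icc u v, ψ y ≠ ⊤) :
    ψ x ≤ max (ψ u) (ψ v) := by
  by_contra hcon
  push_neg at hcon
  set c := max (ψ u) (ψ v) with hc
  have hCclosed : IsClosed {y : ℝ | ψ y ≤ c} := hlsc.isClosed_preimage c
  -- left set
  set C₁ := {y : ℝ | ψ y ≤ c} ∩ Icc u x with hC₁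
  have hC₁c : IsClosed C₁ := hCclosed.inter isClosed_Icc
  have huC₁ : u ∈ C₁ := ⟨show ψ u ≤ c from le_max_left _ _, le_refl u, hux.le⟩
  have hbdd₁ : BddAbove C₁ := (bddAbove_Icc).mono inter_subset_right
  set m := sSup C₁ with hm
  have hmC : m ∈ C₁ := hC₁c.csSup_mem ⟨u, huC₁⟩ hbdd₁
  have hmx : m < x := lt_of_le_of_ne hmC.2.2 (by
    intro h
    exact absurd (h ▸ hmC.1) (not_le.2 hcon))
  -- right set
  set C₂ := {y : ℝ | ψ y ≤ c} ∩ Icc x v with hC₂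
  have hC₂c : IsClosed C₂ := hCclosed.inter isClosed_Icc
  have hvC₂ : v ∈ C₂ := ⟨show ψ v ≤ c from le_max_right _ _, hxv.le, le_refl v⟩
  have hbdd₂ : BddBelow C₂ := (bddBelow_Icc).mono inter_subset_right
  set m' := sInf C₂ with hm'
  have hm'C : m' ∈ C₂ := hC₂c.csInf_mem ⟨v, hvC₂⟩ hbdd₂
  have hxm' : x < m' := lt_of_le_of_ne hm'C.2.1 (by
    intro h
    exact absurd (h ▸ hm'C.1) (not_le.2 hcon))
  have hum : u ≤ m := hmC.2.1
  have hm'v : m' ≤ v := hm'C.2.2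
  -- interior points are > c
  have hgt : ∀ r, m < r → r < m' → c < ψ r := by
    intro r h1 h2
    by_contra hr
    push_neg at hr
    have hruv : r ∈ Icc u v := ⟨le_trans hum h1.le, le_trans h2.le hm'v⟩
    rcases le_total r x with h | h
    · exact absurd (le_csSup hbdd₁ ⟨hr, hruv.1, h⟩) (not_le.2 h1)
    · exact absurd (csInf_le hbdd₂ ⟨hr, h, hruv.2⟩) (not_le.2 h2)
  set p := (m + x)/2 with hp
  set q := (x + m')/2 with hq
  have hmp : m < p := by simp only [hp]; linarith
  have hpx : p < x := by simp only [hp]; linarith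
  have hxq : x < q := by simp only [hq]; linarith
  have hqm' : q < m' := by simp only [hq]; linarith
  have hpq : p ≤ q := by linarith
  have hsub : Icc p q ⊆ Icc u v := fun z hz =>
    ⟨le_trans hum (le_trans hmp.le hz.1), le_trans hz.2 (le_trans hqm'.le hm'v)⟩
  obtain ⟨r₀, hr₀mem, hr₀min⟩ := exists_min_Icc ψ hlsc p q hpq
  have hr₀top : ψ r₀ ≠ ⊤ := hdom _ (hsub hr₀mem)
  have hmr₀ : m < r₀ := lt_of_lt_of_le hmp hr₀mem.1
  have hr₀m' : r₀ < m' := lt_of_le_of_lt hr₀mem.2 hqm'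
  have hgtr₀ : c < ψ r₀ := hgt r₀ hmr₀ hr₀m'
  rcases lt_or_eq_of_le hr₀mem.2 with h | h
  · -- r₀ < q : descend toward m'
    have hlt : ψ m' < ψ r₀ := lt_of_le_of_lt hm'C.1 hgtr₀
    have hεpos : 0 < (q - r₀)/(m' - r₀) := div_pos (by linarith) (by linarith)
    obtain ⟨d, hd, hy⟩ := hdes m' r₀ hr₀top hlt _ hεpos
    have hd2 : d * (m' - r₀) < q - r₀ := by
      have := hd.2
      rw [lt_div_iff₀ (by linarith : (0:ℝ) < m' - r₀)] at this
      linarith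
    have hymem : r₀ + d * (m' - r₀) ∈ Icc p q := by
      constructor
      · nlinarith [hd.1, hr₀mem.1]
      · linarith
    exact absurd (hr₀min _ hymem) (not_le.2 hy)
  · -- r₀ = q : descend toward m
    subst h
    have hlt : ψ m < ψ q := lt_of_le_of_lt hmC.1 hgtr₀
    have hεpos : 0 < (q - p)/(q - m) := div_pos (by linarith) (by linarith)
    obtain ⟨d, hd, hy⟩ := hdes m q hr₀top hlt _ hεpos
    have hd2 : d * (q - m) < q - p := by
      have := hd.2
      rw [lt_div_iff₀ (by linarith : (0:ℝ) < q - m)] at this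
      linarith
    have hymem : q + d * (m - q) ∈ Icc p q := by
      constructor
      · nlinarith [hd.1]
      · nlinarith [hd.1]
    exact absurd (hr₀min _ hymem) (not_le.2 hy)

lemma ssqc_ordered (ψ : ℝ → EReal)
    (hdes : ∀ p q : ℝ, ψ q ≠ ⊤ → ψ p < ψ q → ∀ ε > (0:ℝ),
      ∃ d ∈ Ioo (0:ℝ) ε, ψ (q + d * (p - q)) < ψ q)
    (hqc : ∀ u v x : ℝ, u < x → x < v → (∀ y ∈ Icc u v, ψ y ≠ ⊤) →
      ψ x ≤ max (ψ u) (ψ v))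
    (σ w τ : ℝ) (h1 : σ < w) (h2 : w < τ)
    (hdom : ∀ y ∈ Icc σ τ, ψ y ≠ ⊤)
    (hστ : ψ σ < ψ τ) (hwτ : ψ τ ≤ ψ w) : False := by
  have hdomw : ψ w ≠ ⊤ := hdom w ⟨h1.le, h2.le⟩
  have hle : ψ w ≤ max (ψ σ) (ψ τ) := hqc σ τ w h1 h2 hdom
  rw [max_eq_right hστ.le] at hle
  have hwτ' : ψ w = ψ τ := le_antisymm hle hwτ
  have hσw : ψ σ < ψ w := hwτ' ▸ hστ
  -- y on the left of w with smaller value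
  obtain ⟨d, hd, hy⟩ := hdes σ w hdomw hσw 1 one_pos
  set y := w + d * (σ - w) with hydef
  have hy1 : σ < y := by nlinarith [hd.1, hd.2]
  have hy2 : y < w := by nlinarith [hd.1, hd.2]
  -- μ between w and τ
  set μ := (w + τ)/2 with hμdef
  have hμ1 : w < μ := by simp only [hμdef]; linarith
  have hμ2 : μ < τ := by simp only [hμdef]; linarith
  have hdomμ : ψ μ ≠ ⊤ := hdom μ ⟨by linarith, hμ2.le⟩
  have hψμ_le : ψ μ ≤ ψ τ := by
    have h := hqc σ τ μ (by linarith) hμ2 hdom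
    rwa [max_eq_right hστ.le] at h
  have hψμ_ge : ψ w ≤ ψ μ := by
    have h' := hqc y μ w hy2 hμ1 (fun z hz => hdom z ⟨by linarith [hz.1], by linarith [hz.2]⟩)
    rcases le_total (ψ y) (ψ μ) with h | h
    · rwa [max_eq_right h] at h'
    · rw [max_eq_left h] at h'
      exact absurd (lt_of_le_of_lt h' hy) (lt_irrefl _)
  have hμw : ψ μ = ψ w := le_antisymm (hψμ_le.trans hwτ'.ge) hψμ_ge
  have hσμ : ψ σ < ψ μ := hμw ▸ hσw
  -- z between w and μ with smaller value
  have hεpos : 0 < (μ - w)/(μ - σ) := div_pos (by linarith) (by linarith)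
  obtain ⟨e, he, hz⟩ := hdes σ μ hdomμ hσμ _ hεpos
  set z := μ + e * (σ - μ) with hzdef
  have he2 : e * (μ - σ) < μ - w := by
    have := he.2
    rw [lt_div_iff₀ (by linarith : (0:ℝ) < μ - σ)] at this
    linarith
  have hz1 : w < z := by simp only [hzdef]; nlinarith [he.1]
  have hz2 : z < μ := by simp only [hzdef]; nlinarith [he.1]
  -- final contradiction
  have hfin := hqc y z w hy2 hz1 (fun r hr => hdom r ⟨by linarith [hr.1], by linarith [hr.2]⟩)
  have : max (ψ y) (ψ z) < ψ w := max_lt hy (hμw ▸ hz)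
  exact absurd (lt_of_le_of_lt hfin this) (lt_irrefl _)

lemma ssqc_ordered' (ψ : ℝ → EReal)
    (hdes : ∀ p q : ℝ, ψ q ≠ ⊤ → ψ p < ψ q → ∀ ε > (0:ℝ),
      ∃ d ∈ Ioo (0:ℝ) ε, ψ (q + d * (p - q)) < ψ q)
    (hqc : ∀ u v x : ℝ, u < x → x < v → (∀ y ∈ Icc u v, ψ y ≠ ⊤) →
      ψ x ≤ max (ψ u) (ψ v))
    (σ w τ : ℝ) (h1 : τ < w) (h2 : w < σ)
    (hdom : ∀ y ∈ Icc τ σ, ψ y ≠ ⊤)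
    (hστ : ψ σ < ψ τ) (hwτ : ψ τ ≤ ψ w) : False := by
  set ψ' : ℝ → EReal := fun x => ψ (-x) with hψ'
  have hdes' : ∀ p q : ℝ, ψ' q ≠ ⊤ → ψ' p < ψ' q → ∀ ε > (0:ℝ),
      ∃ d ∈ Ioo (0:ℝ) ε, ψ' (q + d * (p - q)) < ψ' q := by
    intro p q hq hpq ε hε
    obtain ⟨d, hd, h⟩ := hdes (-p) (-q) hq hpq ε hε
    refine ⟨d, hd, ?_⟩
    have harg : -(q + d * (p - q)) = -q + d * (-p - -q) := by ring
    simpa only [hψ', harg] using h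
  have hqc' : ∀ u v x : ℝ, u < x → x < v → (∀ y ∈ Icc u v, ψ' y ≠ ⊤) →
      ψ' x ≤ max (ψ' u) (ψ' v) := by
    intro u v x hux hxv hdom'
    have h := hqc (-v) (-u) (-x) (neg_lt_neg hxv) (neg_lt_neg hux) (by
      intro r hr
      have : -r ∈ Icc u v := ⟨by linarith [hr.2], by linarith [hr.1]⟩
      simpa only [hψ', neg_neg] using hdom' (-r) this)
    simpa only [hψ', neg_neg, max_comm] using h
  exact ssqc_ordered ψ' hdes' hqc' (-σ) (-w) (-τ) (neg_lt_neg h2) (neg_lt_neg h1)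
    (by
      intro r hr
      have : -r ∈ Icc τ σ := ⟨by linarith [hr.2], by linarith [hr.1]⟩
      simpa using hdom (-r) this)
    (by simpa only [hψ', neg_neg] using hστ)
    (by simpa only [hψ', neg_neg] using hwτ)

/-- If `φ` is radially pseudoconvex and radially l.s.c. at `a ∈ dom φ` and `dom φ` is
star-shaped at `a`, then `φ` is radially semistrictly quasiconvex at `a`. -/
theorem radially_ssqc_of_radially_pseudoconvex
    {X : Type*} [AddCommGroup X] [Module ℝ X]
    (φ : X → EReal) (a : X) (ha : φ a ≠ ⊤)
    (hradlsc : ∀ b : X, LowerSemicontinuous (radRestr φ a b))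
    (hradpc : ∀ b : X, PCone (radRestr φ a b))
    (hstar : ∀ x : X, φ x ≠ ⊤ → ∀ t ∈ Set.Icc (0 : ℝ) 1, φ (t • a + (1 - t) • x) ≠ ⊤) :
    ∀ b : X, SSQCone (radRestr φ a b) := by
  intro b s t hs ht hst l hl
  set ψ := radRestr φ a b with hψ
  have hdes : ∀ p q : ℝ, ψ q ≠ ⊤ → ψ p < ψ q → ∀ ε > (0:ℝ),
      ∃ d ∈ Ioo (0:ℝ) ε, ψ (q + d * (p - q)) < ψ q :=
    fun p q hq hlt ε hε => descent_of_PCone ψ (hradpc b) p q hq hlt ε hε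
  have hqc : ∀ u v x : ℝ, u < x → x < v → (∀ y ∈ Icc u v, ψ y ≠ ⊤) →
      ψ x ≤ max (ψ u) (ψ v) := qc_lemma ψ (hradlsc b) hdes
  -- membership facts
  have hmem : ∀ r : ℝ, ψ r ≠ ⊤ → r ∈ Icc (0:ℝ) 1 := by
    intro r hr
    by_contra h
    exact hr (if_neg h)
  -- star-shapedness: downward closure of domain
  have hdom0 : ∀ β : ℝ, ψ β ≠ ⊤ → ∀ x ∈ Icc (0:ℝ) β, ψ x ≠ ⊤ := by
    intro β hβ x hx
    have hβIcc : β ∈ Icc (0:ℝ) 1 := hmem β hβ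
    have hxIcc : x ∈ Icc (0:ℝ) 1 := ⟨hx.1, le_trans hx.2 hβIcc.2⟩
    rcases eq_or_lt_of_le hβIcc.1 with h0 | h0
    · have : x = 0 := le_antisymm (h0 ▸ hx.2) hx.1
      rw [this]
      simp only [hψ, radRestr, if_pos (show (0:ℝ) ∈ Icc (0:ℝ) 1 by constructor <;> norm_num)]
      simpa using ha
    · -- β > 0
      have hβ' : φ (a + β • (b - a)) ≠ ⊤ := by
        simpa only [hψ, radRestr, if_pos hβIcc] using hβ
      have hτIcc : 1 - x/β ∈ Icc (0:ℝ) 1 := by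
        constructor
        · have : x/β ≤ 1 := by
            rw [div_le_one h0]; exact hx.2
          linarith
        · have : 0 ≤ x/β := div_nonneg hx.1 h0.le
          linarith
      have hkey := hstar (a + β • (b - a)) hβ' (1 - x/β) hτIcc
      have harg : (1 - x/β) • a + (1 - (1 - x/β)) • (a + β • (b - a)) = a + x • (b - a) := by
        have hβ0 : β ≠ 0 := ne_of_gt h0
        match_scalars <;> field_simp <;> ring
      rw [harg] at hkey
      simpa only [hψ, radRestr, if_pos hxIcc] using hkey
  have hst' : s ≠ t := fun h => hst (by rw [h])
  set w := s + l * (t - s) with hw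
  have hdomst : ∀ y ∈ Icc (min s t) (max s t), ψ y ≠ ⊤ := by
    intro y hy
    have h0 : (0:ℝ) ≤ min s t := le_min (hmem s hs).1 (hmem t ht).1
    have hmaxne : ψ (max s t) ≠ ⊤ := by
      rcases le_total s t with h | h
      · rwa [max_eq_right h]
      · rwa [max_eq_left h]
    exact hdom0 (max s t) hmaxne y ⟨le_trans h0 hy.1, hy.2⟩
  by_contra hcon
  push_neg at hcon
  rcases hst'.lt_or_gt with hlt | hlt
  · -- s < t
    have hw1 : s < w := by simp only [hw]; nlinarith [hl.1, hl.2]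
    have hw2 : w < t := by simp only [hw]; nlinarith [hl.1, hl.2]
    have hdom' : ∀ y ∈ Icc s t, ψ y ≠ ⊤ := by
      intro y hy
      exact hdomst y ⟨by rw [min_eq_left hlt.le]; exact hy.1, by rw [max_eq_right hlt.le]; exact hy.2⟩
    rcases hst.lt_or_gt with hv | hv
    · -- ψ s < ψ t ; max = ψ t
      have hwτ : ψ t ≤ ψ w := le_trans (le_max_right _ _) hcon
      exact ssqc_ordered ψ hdes hqc s w t hw1 hw2 hdom' hv hwτ
    · -- ψ t < ψ s ; σ := t, τ := s, τ < w < σ is  s < w < t with σ=t τ=s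
      have hwτ : ψ s ≤ ψ w := le_trans (le_max_left _ _) hcon
      exact ssqc_ordered' ψ hdes hqc t w s hw1 hw2 hdom' hv hwτ
  · -- t < s
    have hw1 : t < w := by simp only [hw]; nlinarith [hl.1, hl.2]
    have hw2 : w < s := by simp only [hw]; nlinarith [hl.1, hl.2]
    have hdom' : ∀ y ∈ Icc t s, ψ y ≠ ⊤ := by
      intro y hy
      exact hdomst y ⟨by rw [min_eq_right hlt.le]; exact hy.1, by rw [max_eq_left hlt.le]; exact hy.2⟩
    rcases hst.lt_or_gt with hv | hv
    · -- ψ s < ψ t ; σ := s, τ := t : τ < w < σ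
      have hwτ : ψ t ≤ ψ w := le_trans (le_max_right _ _) hcon
      exact ssqc_ordered' ψ hdes hqc s w t hw1 hw2 hdom' hv hwτ
    · -- ψ t < ψ s : σ := t, τ := s, σ < w < τ is t < w < s
      have hwτ : ψ s ≤ ψ w := le_trans (le_max_left _ _) hcon
      exact ssqc_ordered ψ hdes hqc t w s hw1 hw2 hdom' hv hwτ
end

section
/- Let φ : X → ℝ ∪ {±∞} be such that φ(a + t(b-a)) ≤ max{φ(a), φ(b)} for all b ∈ X, t ∈ (0,1), for a fixed a with φ(a) = inf_X φ, a ∈ dom φ. Then for every b ∈ X and every pair 0 ≤ s₁ < s₂ ≤ 1 and α ∈ (0,1), φ(a + (α s₁ + (1-α) s₂)(b - a)) ≤ max{φ(a + s₁(b-a)), φ(a + s₂(b-a))}; i.e., t ↦ φ(a + t(b-a)) is quasiconvex on [0,1]. -/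
open Set

/-- If `φ(a + t(b-a)) ≤ max{φ(a), φ(b)}` for all `b` and `t ∈ (0,1)`, where `a ∈ dom φ`
attains the infimum of `φ`, then `t ↦ φ(a + t(b-a))` is quasiconvex on `[0,1]`. -/
theorem radial_quasiconvex_on_segment
    {X : Type*} [AddCommGroup X] [Module ℝ X]
    (φ : X → EReal) (a : X) (ha : φ a ≠ ⊤) (hmin : ∀ x : X, φ a ≤ φ x)
    (hq : ∀ b : X, ∀ t ∈ Set.Ioo (0 : ℝ) 1, φ (a + t • (b - a)) ≤ max (φ a) (φ b)) :
    ∀ b : X, ∀ s₁ s₂ : ℝ, 0 ≤ s₁ → s₁ < s₂ → s₂ ≤ 1 → ∀ α ∈ Set.Ioo (0 : ℝ) 1,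
      φ (a + (α * s₁ + (1 - α) * s₂) • (b - a)) ≤
        max (φ (a + s₁ • (b - a))) (φ (a + s₂ • (b - a))) := by
  intro b s₁ s₂ h0 h12 h1 α hα
  obtain ⟨hα0, hα1⟩ := hα
  have hs₂ : 0 < s₂ := lt_of_le_of_lt h0 h12
  set m : ℝ := α * s₁ + (1 - α) * s₂ with hm
  have hmpos : 0 < m := by nlinarith
  have hmlt : m < s₂ := by nlinarith
  set q : X := a + s₂ • (b - a) with hqdef
  have hkey : a + m • (b - a) = a + (m / s₂) • (q - a) := by
    rw [hqdef]
    rw [add_sub_cancel_left, smul_smul, div_mul_cancel₀ _ hs₂.ne']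
  rw [hkey]
  have := hq q (m / s₂) ⟨by positivity, (div_lt_one hs₂).2 hmlt⟩
  exact this.trans (max_le_max (hmin _) le_rfl)
end
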